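/- Let h(p) = 2p² - p³ - θ p³(1-p)³ for θ ∈ [-1,1]. Then h is increasing on [0,1], h(0) = 0, and h(1) = 1. (h is the dual distortion function of the coherent system min{X₁, max{X₂,X₃}} with FGM copula.) -/

import Mathlib

lemma fgm_hasDerivAt (θ x : ℝ) :
    HasDerivAt (fun p : ℝ => 2 * p ^ 2 - p ^ 3 - θ * p ^ 3 * (1 - p) ^ 3)
      (2 * (2 * x) - 3 * x ^ 2 -
        (θ * (3 * x ^ 2) * (1 - x) ^ 3 + θ * x ^ 3 * (3 * (1 - x) ^ 2 * (-1)))) x := by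
  have hp2 : HasDerivAt (fun p : ℝ => p ^ 2) (2 * x) x := by
    simpa using hasDerivAt_pow 2 x
  have hp3 : HasDerivAt (fun p : ℝ => p ^ 3) (3 * x ^ 2) x := by
    simpa using hasDerivAt_pow 3 x
  have h1m : HasDerivAt (fun p : ℝ => 1 - p) (-1) x := by
    simpa using (hasDerivAt_id x).const_sub 1
  have h1m3 : HasDerivAt (fun p : ℝ => (1 - p) ^ 3) (3 * (1 - x) ^ 2 * (-1)) x := by
    simpa using h1m.fun_pow 3
  have := ((hp2.const_mul 2).fun_sub hp3).fun_sub (((hp3.const_mul θ).fun_mul h1m3))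
  convert this using 2 <;> ring

lemma fgm_mono (θ : ℝ) (hθ : θ ∈ Set.Icc (-1 : ℝ) 1) :
    MonotoneOn (fun p : ℝ => 2 * p ^ 2 - p ^ 3 - θ * p ^ 3 * (1 - p) ^ 3)
        (Set.Icc (0 : ℝ) 1) := by
  obtain ⟨h1, h2⟩ := hθ
  apply monotoneOn_of_deriv_nonneg (convex_Icc 0 1)
  · exact (Continuous.continuousOn (by continuity))
  · intro x hx
    exact (fgm_hasDerivAt θ x).differentiableAt.differentiableWithinAt
  · intro x hx
    rw [interior_Icc] at hx
    rw [(fgm_hasDerivAt θ x).deriv]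
    obtain ⟨hx0, hx1⟩ := hx
    rcases le_total x (1/2) with hc | hc
    · nlinarith [mul_nonneg (mul_nonneg (by linarith : (0:ℝ) ≤ 1 - θ)
          (mul_nonneg (sq_nonneg x) (sq_nonneg (1 - x)))) (by linarith : (0:ℝ) ≤ 1 - 2*x),
        sq_nonneg (3*x - 1), mul_nonneg hx0.le (sq_nonneg (3*x - 1)),
        mul_nonneg (mul_nonneg hx0.le hx0.le) (sq_nonneg (3*x - 1)),
        mul_nonneg (mul_nonneg (mul_nonneg hx0.le hx0.le) hx0.le) (sq_nonneg (3*x - 1))]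
    · nlinarith [mul_nonneg (mul_nonneg (by linarith : (0:ℝ) ≤ 1 + θ)
          (mul_nonneg (sq_nonneg x) (sq_nonneg (1 - x)))) (by linarith : (0:ℝ) ≤ 2*x - 1),
        sq_nonneg (3*x - 1), mul_nonneg hx0.le (sq_nonneg (3*x - 1)),
        mul_nonneg (mul_nonneg hx0.le hx0.le) (sq_nonneg (3*x - 1)),
        mul_nonneg (mul_nonneg (mul_nonneg hx0.le hx0.le) hx0.le) (sq_nonneg (3*x - 1))]

theorem fgm_domination_function (θ : ℝ) (hθ : θ ∈ Set.Icc (-1 : ℝ) 1) :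
    MonotoneOn (fun p : ℝ => 2 * p ^ 2 - p ^ 3 - θ * p ^ 3 * (1 - p) ^ 3)
        (Set.Icc (0 : ℝ) 1) ∧
      (2 * (0:ℝ) ^ 2 - (0:ℝ) ^ 3 - θ * (0:ℝ) ^ 3 * (1 - 0) ^ 3 = 0) ∧
      (2 * (1:ℝ) ^ 2 - (1:ℝ) ^ 3 - θ * (1:ℝ) ^ 3 * (1 - 1) ^ 3 = 1) ∧
      ∀ p ∈ Set.Icc (0 : ℝ) 1,
        2 * p ^ 2 - p ^ 3 - θ * p ^ 3 * (1 - p) ^ 3 ∈ Set.Icc (0 : ℝ) 1 := by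
  have hm := fgm_mono θ hθ
  refine ⟨hm, by ring, by ring, fun p hp => ?_⟩
  have h0 : (0:ℝ) ∈ Set.Icc (0:ℝ) 1 := by norm_num
  have h1 : (1:ℝ) ∈ Set.Icc (0:ℝ) 1 := by norm_num
  have hlo := hm h0 hp hp.1
  have hhi := hm hp h1 hp.2
  simp only at hlo hhi
  constructor <;> nlinarith
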